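/- For all x in (0, 1), e^(-a·x²) < cos x, where a = -log(cos 1) ≈ 0.615626. -/

import Mathlib

open Real Set

private lemma cos_pos01 {x : ℝ} (h0 : (0:ℝ) ≤ x) (h1 : x ≤ 1) : 0 < Real.cos x := by
  apply Real.cos_pos_of_mem_Ioo
  constructor
  · have := Real.pi_gt_three; linarith
  · have := Real.pi_gt_three; linarith

private noncomputable def uAux (x : ℝ) : ℝ :=
  x * (Real.sin x / Real.cos x) + 2 * Real.log (Real.cos x)

private lemma hasDerivAt_uAux {x : ℝ} (hc : Real.cos x ≠ 0) :
    HasDerivAt uAux (x / (Real.cos x)^2 - Real.sin x / Real.cos x) x := by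
  have hsin := Real.hasDerivAt_sin x
  have hcos := Real.hasDerivAt_cos x
  have htan : HasDerivAt (fun y => Real.sin y / Real.cos y)
      ((Real.cos x * Real.cos x - Real.sin x * (-Real.sin x)) / (Real.cos x)^2) x :=
    hsin.div hcos hc
  have h1 : HasDerivAt (fun y => y * (Real.sin y / Real.cos y))
      (1 * (Real.sin x / Real.cos x) +
        x * ((Real.cos x * Real.cos x - Real.sin x * (-Real.sin x)) / (Real.cos x)^2)) x :=
    (hasDerivAt_id x).mul htan
  have h2 : HasDerivAt (fun y => Real.log (Real.cos y)) (-Real.sin x / Real.cos x) x :=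
    hcos.log hc
  have h3 : HasDerivAt uAux
      ((1 * (Real.sin x / Real.cos x) +
        x * ((Real.cos x * Real.cos x - Real.sin x * (-Real.sin x)) / (Real.cos x)^2)) +
        2 * (-Real.sin x / Real.cos x)) x := h1.add (h2.const_mul 2)
  convert h3 using 1
  have hpyth := Real.sin_sq_add_cos_sq x
  have hone : Real.cos x * Real.cos x - Real.sin x * (-Real.sin x) = 1 := by nlinarith [hpyth]
  rw [hone]
  field_simp
  ring

private lemma uAux_pos {x : ℝ} (hx : x ∈ Set.Ioc (0:ℝ) 1) : 0 < uAux x := by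
  have hmono : StrictMonoOn uAux (Set.Icc (0:ℝ) 1) := by
    apply strictMonoOn_of_deriv_pos (convex_Icc 0 1)
    · apply ContinuousOn.add
      · exact (continuousOn_id.mul ((Real.continuous_sin.continuousOn).div
          (Real.continuous_cos.continuousOn) (fun y hy => (cos_pos01 hy.1 hy.2).ne')))
      · exact (continuousOn_const.mul ((Real.continuous_cos.continuousOn).log
          (fun y hy => (cos_pos01 hy.1 hy.2).ne')))
    · intro y hy
      rw [interior_Icc] at hy
      have hc := cos_pos01 hy.1.le hy.2.le
      rw [(hasDerivAt_uAux hc.ne').deriv]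
      have hsinlt : Real.sin y < y := Real.sin_lt hy.1
      have hsinnn : 0 ≤ Real.sin y := Real.sin_nonneg_of_nonneg_of_le_pi hy.1.le
        (by have := Real.pi_gt_three; linarith [hy.2])
      have hcle : Real.cos y ≤ 1 := Real.cos_le_one y
      rw [div_sub_div _ _ (by positivity) hc.ne']
      apply div_pos
      · nlinarith [mul_pos hy.1 hc, mul_nonneg hsinnn hc.le]
      · positivity
  have h0 : uAux 0 = 0 := by simp [uAux]
  have := hmono (Set.mem_Icc.mpr ⟨le_refl 0, zero_le_one⟩)
    (Set.mem_Icc.mpr ⟨hx.1.le, hx.2⟩) hx.1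
  rwa [h0] at this

private lemma phi_anti : StrictAntiOn (fun x => Real.log (Real.cos x) / x^2) (Set.Ioc (0:ℝ) 1) := by
  apply strictAntiOn_of_deriv_neg (convex_Ioc 0 1)
  · apply ContinuousOn.div
    · exact (Real.continuous_cos.continuousOn).log
        (fun y hy => (cos_pos01 hy.1.le hy.2).ne')
    · exact (continuous_pow 2).continuousOn
    · intro y hy; have hy0 := hy.1; positivity
  · intro y hy
    rw [interior_Ioc] at hy
    have hc := cos_pos01 hy.1.le hy.2.le
    have hlog : HasDerivAt (fun z => Real.log (Real.cos z)) (-Real.sin y / Real.cos y) y :=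
      (Real.hasDerivAt_cos y).log hc.ne'
    have hpow : HasDerivAt (fun z : ℝ => z^2) (2 * y^(2-1) * 1) y := by
      simpa using hasDerivAt_pow 2 y
    have hdiv : HasDerivAt (fun z => Real.log (Real.cos z) / z^2)
        (((-Real.sin y / Real.cos y) * y^2 - Real.log (Real.cos y) * (2 * y^(2-1) * 1)) / (y^2)^2)
        y := hlog.div hpow (by have hy0 := hy.1; positivity)
    rw [hdiv.deriv]
    apply div_neg_of_neg_of_pos
    · have hu := uAux_pos (Set.mem_Ioc.mpr ⟨hy.1, hy.2.le⟩)
      unfold uAux at hu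
      have hy0 : 0 < y := hy.1
      norm_num
      rw [neg_div]
      nlinarith [hu, mul_pos hy0 hu]
    · have hy0 : 0 < y := hy.1
      positivity

theorem stmt_2 : ∀ x ∈ Set.Ioo (0:ℝ) 1,
    Real.exp (-(-Real.log (Real.cos 1)) * x^2) < Real.cos x := by
  intro x hx
  have hx0 := hx.1
  have hx1 := hx.2
  have hcx := cos_pos01 hx0.le hx1.le
  have hphi := phi_anti (Set.mem_Ioc.mpr ⟨hx0, hx1.le⟩)
    (Set.mem_Ioc.mpr ⟨one_pos, le_refl 1⟩) hx1
  norm_num at hphi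
  -- hphi : log (cos 1) < log (cos x) / x^2
  have hx2 : (0:ℝ) < x^2 := pow_pos hx0 2
  have hmul : Real.log (Real.cos 1) * x^2 < Real.log (Real.cos x) := by
    have := (mul_lt_mul_of_pos_right hphi hx2)
    rwa [div_mul_cancel₀ _ hx2.ne'] at this
  have : Real.exp (Real.log (Real.cos 1) * x^2) < Real.exp (Real.log (Real.cos x)) :=
    Real.exp_lt_exp.mpr hmul
  rw [Real.exp_log hcx] at this
  convert this using 2
  ring
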